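/- The mean chord length μ_N = 2^{N-1}·B(N/2, N/2)/B(N - 1/2, 1/2) of the unit sphere S^{N-1} satisfies lim_{N→∞} μ_N = √2, and consequently the variance of the chord length tends to 0 as N → ∞. -/

import Mathlib

open MeasureTheory Metric Filter Real Pointwise

/-- The uniform (normalized surface) probability measure on the unit sphere of
`ℝ^N`, viewed as a measure on the ambient space. -/
noncomputable def uniformOnSphere (N : ℕ) : Measure (EuclideanSpace ℝ (Fin N)) :=
  (((volume : Measure (EuclideanSpace ℝ (Fin N))).toSphere Set.univ)⁻¹ •
    (volume : Measure (EuclideanSpace ℝ (Fin N))).toSphere).map Subtype.val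

/-- The (incomplete) Euler beta integral `B(x; a, b)`. -/
noncomputable def incBeta (x a b : ℝ) : ℝ :=
  ∫ t in (0:ℝ)..x, t ^ (a - 1) * (1 - t) ^ (b - 1)

/-- The Euler Beta function `B(a,b) = B(1; a, b)`. -/
noncomputable def betaFn (a b : ℝ) : ℝ := incBeta 1 a b

/-- The regularized incomplete beta function `I_x(a,b)`. -/
noncomputable def regIncBeta (x a b : ℝ) : ℝ := incBeta x a b / betaFn a b

section Part1

lemma betaFn_eq {a b : ℝ} (ha : 0 < a) (hb : 0 < b) :
    betaFn a b = Real.Gamma a * Real.Gamma b / Real.Gamma (a + b) := by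
  have h := Complex.Gamma_mul_Gamma_eq_betaIntegral (s := (a:ℂ)) (t := (b:ℂ))
    (by simpa using ha) (by simpa using hb)
  have hbeta : Complex.betaIntegral (a:ℂ) (b:ℂ) = ((betaFn a b : ℝ) : ℂ) := by
    rw [betaFn, incBeta, Complex.betaIntegral, ← intervalIntegral.integral_ofReal]
    refine intervalIntegral.integral_congr fun x hx => ?_
    rw [Set.uIcc_of_le (by norm_num : (0:ℝ) ≤ 1)] at hx
    rw [Complex.ofReal_mul, Complex.ofReal_cpow hx.1, Complex.ofReal_cpow (by linarith [hx.2])]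
    push_cast
    ring
  rw [hbeta, ← Complex.ofReal_add, Complex.Gamma_ofReal, Complex.Gamma_ofReal,
    Complex.Gamma_ofReal, ← Complex.ofReal_mul, ← Complex.ofReal_mul] at h
  have h' : Real.Gamma a * Real.Gamma b = Real.Gamma (a + b) * betaFn a b := by
    exact_mod_cast h
  have hne : Real.Gamma (a + b) ≠ 0 := (Real.Gamma_pos_of_pos (by linarith)).ne'
  field_simp [hne, h']
  rw [h']; ring

/-- `hseq n = Γ(n+1/2)·√n / n!`, which tends to 1. -/
noncomputable def hseq (n : ℕ) : ℝ := Real.Gamma (n + 1/2) * Real.sqrt n / n.factorial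

lemma Gamma_nat_add_half (n : ℕ) :
    Real.Gamma (n + 1/2) = Real.Gamma (1/2) * ∏ j ∈ Finset.range n, (1/2 + (j:ℝ)) := by
  induction n with
  | zero => simp
  | succ n ih =>
    have h : ((n:ℝ) + 1) + 1/2 = (n + 1/2) + 1 := by ring
    push_cast
    rw [h, Real.Gamma_add_one (by positivity), ih, Finset.prod_range_succ]
    ring

lemma hseq_pos {n : ℕ} (hn : 1 ≤ n) : 0 < hseq n := by
  have hn0 : (0:ℝ) < n := by exact_mod_cast hn
  have := Real.Gamma_pos_of_pos (show (0:ℝ) < n + 1/2 by positivity)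
  have := Real.sqrt_pos.2 hn0
  have : (0:ℝ) < n.factorial := by exact_mod_cast n.factorial_pos
  rw [hseq]; positivity

lemma hseq_tendsto : Tendsto hseq atTop (nhds 1) := by
  have hg5 : Real.Gamma (1/2) ≠ 0 := (Real.Gamma_pos_of_pos (by norm_num)).ne'
  have hmain : Tendsto (fun n : ℕ =>
      Real.Gamma (1/2) * ((n:ℝ) / (1/2 + n)) / Real.GammaSeq (1/2) n) atTop
      (nhds (Real.Gamma (1/2) * 1 / Real.Gamma (1/2))) := by
    refine Filter.Tendsto.div (Filter.Tendsto.const_mul _ ?_)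
      (Real.GammaSeq_tendsto_Gamma (1/2)) hg5
    have h1 : Tendsto (fun n : ℕ => ((1:ℝ)/2 + n)⁻¹) atTop (nhds 0) := by
      refine tendsto_inv_atTop_zero.comp ?_
      exact tendsto_atTop_add_const_left _ _ tendsto_natCast_atTop_atTop
    have h2 : Tendsto (fun n : ℕ => 1 - (1/2) * ((1:ℝ)/2 + n)⁻¹) atTop (nhds (1 - (1/2) * 0)) :=
      tendsto_const_nhds.sub (tendsto_const_nhds.mul h1)
    rw [show (1:ℝ) - (1/2) * 0 = 1 by norm_num] at h2
    refine h2.congr' ?_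
    filter_upwards [eventually_ge_atTop 1] with n hn
    have hne : (1:ℝ)/2 + n ≠ 0 := by positivity
    field_simp
    ring
  rw [show Real.Gamma (1/2) * 1 / Real.Gamma (1/2) = 1 by field_simp] at hmain
  refine hmain.congr' ?_
  filter_upwards [eventually_ge_atTop 1] with n hn
  have hn0 : (0:ℝ) < n := by exact_mod_cast hn
  have hsq : Real.sqrt n * Real.sqrt n = (n:ℝ) := Real.mul_self_sqrt hn0.le
  have hsqpos : (0:ℝ) < Real.sqrt n := Real.sqrt_pos.2 hn0
  have hP : (0:ℝ) < ∏ j ∈ Finset.range n, (1/2 + (j:ℝ)) :=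
    Finset.prod_pos fun j _ => by positivity
  have hfact : (0:ℝ) < (n.factorial : ℝ) := by exact_mod_cast n.factorial_pos
  have hGS : Real.GammaSeq (1/2) n = Real.sqrt n * n.factorial /
      ((∏ j ∈ Finset.range n, ((1:ℝ)/2 + j)) * (1/2 + n)) := by
    rw [Real.GammaSeq, Finset.prod_range_succ, Real.sqrt_eq_rpow]
  rw [hseq, _root_.Gamma_nat_add_half, hGS]
  set s := Real.sqrt (n:ℝ) with hs
  rw [← hsq]
  have h1 : (1:ℝ)/2 + s * s ≠ 0 := by positivity
  have h2 : s ≠ 0 := hsqpos.ne'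
  have h3 : (n.factorial : ℝ) ≠ 0 := hfact.ne'
  have h4 : (∏ j ∈ Finset.range n, ((1:ℝ)/2 + (j:ℝ))) ≠ 0 := hP.ne'
  field_simp

noncomputable def gseq (N : ℕ) : ℝ :=
  Real.Gamma ((N:ℝ)/2) * Real.Gamma N /
    (Real.Gamma (((N:ℝ)+1)/2) * Real.Gamma ((N:ℝ) - 1/2))

lemma Gamma_half_eq {n : ℕ} (hn : 1 ≤ n) :
    Real.Gamma ((n:ℝ) + 1/2) = hseq n * n.factorial / Real.sqrt n := by
  have hn0 : (0:ℝ) < n := by exact_mod_cast hn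
  have h2 : Real.sqrt (n:ℝ) ≠ 0 := (Real.sqrt_pos.2 hn0).ne'
  have h3 : (n.factorial : ℝ) ≠ 0 := by exact_mod_cast n.factorial_pos.ne'
  rw [hseq]; field_simp

lemma Gamma_nat_eq {n : ℕ} (hn : 1 ≤ n) :
    Real.Gamma ((n:ℝ)) = (n-1).factorial := by
  have : ((n:ℝ)) = ((n-1 : ℕ) : ℝ) + 1 := by
    have : (n - 1 : ℕ) + 1 = n := by omega
    exact_mod_cast (by exact_mod_cast congrArg (Nat.cast (R := ℝ)) this.symm)
  rw [this, Real.Gamma_nat_eq_factorial]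

lemma mu_eq_g {N : ℕ} (hN : 2 ≤ N) :
    2 ^ (N-1) * betaFn ((N:ℝ)/2) ((N:ℝ)/2) / betaFn ((N:ℝ) - 1/2) (1/2) = gseq N := by
  have hN2 : (2:ℝ) ≤ N := by exact_mod_cast hN
  have hA := betaFn_eq (a := (N:ℝ)/2) (b := (N:ℝ)/2) (by linarith) (by linarith)
  rw [show (N:ℝ)/2 + (N:ℝ)/2 = (N:ℝ) by ring] at hA
  have hB := betaFn_eq (a := (N:ℝ) - 1/2) (b := 1/2) (by linarith) (by norm_num)
  rw [show (N:ℝ) - 1/2 + 1/2 = (N:ℝ) by ring] at hB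
  have hdup := Real.Gamma_mul_Gamma_add_half_of_pos (s := (N:ℝ)/2) (by linarith)
  rw [show 2 * ((N:ℝ)/2) = (N:ℝ) by ring] at hdup
  rw [show (N:ℝ)/2 + 1/2 = ((N:ℝ)+1)/2 by ring] at hdup
  have hpow : (2:ℝ) ^ (N-1 : ℕ) * (2:ℝ) ^ ((1:ℝ) - (N:ℝ)) = 1 := by
    rw [← Real.rpow_natCast 2 (N-1), Nat.cast_sub (by omega : 1 ≤ N),
      ← Real.rpow_add two_pos, show ((N:ℝ) - (1:ℕ)) + (1 - (N:ℝ)) = 0 by push_cast; ring,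
      Real.rpow_zero]
  have hG1 : (0:ℝ) < Real.Gamma ((N:ℝ)) := Real.Gamma_pos_of_pos (by linarith)
  have hG2 : (0:ℝ) < Real.Gamma ((N:ℝ)/2) := Real.Gamma_pos_of_pos (by linarith)
  have hG3 : (0:ℝ) < Real.Gamma (((N:ℝ)+1)/2) := Real.Gamma_pos_of_pos (by linarith)
  have hG4 : (0:ℝ) < Real.Gamma ((N:ℝ) - 1/2) := Real.Gamma_pos_of_pos (by linarith)
  have hpi : (0:ℝ) < Real.sqrt π := Real.sqrt_pos.2 Real.pi_pos
  have hGhalf : Real.Gamma (1/2 : ℝ) = Real.sqrt π := Real.Gamma_one_half_eq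
  rw [hA, hB, hGhalf, gseq]
  set GN := Real.Gamma ((N:ℝ)) with hGN
  set G2 := Real.Gamma ((N:ℝ)/2) with hG2'
  set G3 := Real.Gamma (((N:ℝ)+1)/2) with hG3'
  set G4 := Real.Gamma ((N:ℝ) - 1/2) with hG4'
  have h1 : GN ≠ 0 := hG1.ne'
  have h3 : G3 ≠ 0 := hG3.ne'
  have h4 : G4 ≠ 0 := hG4.ne'
  have hpi' : Real.sqrt π ≠ 0 := hpi.ne'
  field_simp
  linear_combination (2 ^ (N-1 : ℕ)) * hdup + (GN * Real.sqrt π) * hpow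

lemma gseq_even {m : ℕ} (hm : 1 ≤ m) :
    gseq (2*m) = Real.sqrt ((2*(m:ℝ)-1)/m) / (hseq m * hseq (2*m-1)) := by
  have hm0 : (0:ℝ) < m := by exact_mod_cast hm
  have hm1 : (1:ℝ) ≤ m := by exact_mod_cast hm
  have hk : ((2*m-1 : ℕ) : ℝ) = 2*(m:ℝ) - 1 := by
    have : (2*m-1 : ℕ) + 1 = 2*m := by omega
    push_cast [Nat.cast_sub (by omega : 1 ≤ 2*m)]; ring
  have e1 : Real.Gamma (((2*m : ℕ)):ℝ) = ((2*m-1).factorial : ℝ) := Gamma_nat_eq (by omega)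
  have e2 : Real.Gamma ((m:ℝ)) = ((m-1).factorial : ℝ) := Gamma_nat_eq hm
  have e3 : Real.Gamma ((m:ℝ) + 1/2) = hseq m * m.factorial / Real.sqrt m := Gamma_half_eq hm
  have e4 : Real.Gamma (((2*m-1:ℕ):ℝ) + 1/2)
      = hseq (2*m-1) * (2*m-1).factorial / Real.sqrt ((2*m-1:ℕ):ℝ) :=
    Gamma_half_eq (by omega)
  rw [hk] at e4
  have hfm : (m.factorial : ℝ) = m * (m-1).factorial := by
    have : m.factorial = m * (m-1).factorial := by
      conv_lhs => rw [show m = (m-1)+1 by omega]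
      rw [Nat.factorial_succ]; congr 1; omega
    exact_mod_cast this
  rw [gseq]
  push_cast
  rw [show (2*(m:ℝ))/2 = (m:ℝ) by ring, show ((2*(m:ℝ))+1)/2 = (m:ℝ) + 1/2 by ring,
    show (2*(m:ℝ)) - 1/2 = (2*(m:ℝ)-1) + 1/2 by ring]
  rw [show Real.Gamma (2*(m:ℝ)) = ((2*m-1).factorial : ℝ) by exact_mod_cast e1]
  rw [e2, e3, e4, hfm]
  rw [Real.sqrt_div (by linarith : (0:ℝ) ≤ 2*(m:ℝ)-1)]
  have hs1 : Real.sqrt (m:ℝ) ≠ 0 := (Real.sqrt_pos.2 hm0).ne'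
  have hs2 : Real.sqrt (2*(m:ℝ)-1) ≠ 0 := (Real.sqrt_pos.2 (by linarith : (0:ℝ) < 2*(m:ℝ)-1)).ne'
  have hh1 : hseq m ≠ 0 := (hseq_pos hm).ne'
  have hh2 : hseq (2*m-1) ≠ 0 := (hseq_pos (by omega)).ne'
  have hf1 : ((m-1).factorial : ℝ) ≠ 0 := by exact_mod_cast (m-1).factorial_pos.ne'
  have hf2 : (((2*m-1).factorial : ℕ) : ℝ) ≠ 0 := by exact_mod_cast (2*m-1).factorial_pos.ne'
  have hsq : Real.sqrt (m:ℝ) * Real.sqrt (m:ℝ) = (m:ℝ) := Real.mul_self_sqrt hm0.le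
  field_simp
  linear_combination (Real.sqrt ((m:ℝ)*2-1)) * hsq

lemma gseq_odd {m : ℕ} (hm : 1 ≤ m) :
    gseq (2*m+1) = hseq m * Real.sqrt 2 / hseq (2*m) := by
  have hm0 : (0:ℝ) < m := by exact_mod_cast hm
  have e1 : Real.Gamma (((2*m+1 : ℕ)):ℝ) = ((2*m).factorial : ℝ) := by
    push_cast; exact_mod_cast Real.Gamma_nat_eq_factorial (2*m)
  have e2 : Real.Gamma ((m:ℝ) + 1) = (m.factorial : ℝ) := Real.Gamma_nat_eq_factorial m
  have e3 : Real.Gamma ((m:ℝ) + 1/2) = hseq m * m.factorial / Real.sqrt m := Gamma_half_eq hm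
  have e4 : Real.Gamma (((2*m:ℕ):ℝ) + 1/2)
      = hseq (2*m) * (2*m).factorial / Real.sqrt ((2*m:ℕ):ℝ) := Gamma_half_eq (by omega)
  rw [gseq]
  push_cast
  rw [show ((2*(m:ℝ)+1))/2 = (m:ℝ) + 1/2 by ring,
    show ((2*(m:ℝ)+1)+1)/2 = (m:ℝ) + 1 by ring,
    show (2*(m:ℝ)+1) - 1/2 = (2*(m:ℝ)) + 1/2 by ring]
  rw [show Real.Gamma (2*(m:ℝ)+1) = ((2*m).factorial : ℝ) by exact_mod_cast e1]
  rw [e2, e3]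
  rw [show Real.Gamma (2*(m:ℝ) + 1/2) = hseq (2*m) * (2*m).factorial / Real.sqrt ((2*m:ℕ):ℝ) by
    exact_mod_cast e4]
  have hsm : Real.sqrt ((2*m:ℕ):ℝ) = Real.sqrt 2 * Real.sqrt m := by
    push_cast; rw [Real.sqrt_mul (by norm_num : (0:ℝ) ≤ 2)]
  rw [hsm]
  have hs1 : Real.sqrt (m:ℝ) ≠ 0 := (Real.sqrt_pos.2 hm0).ne'
  have hs2 : Real.sqrt (2:ℝ) ≠ 0 := by positivity
  have hh1 : hseq m ≠ 0 := (hseq_pos hm).ne'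
  have hh2 : hseq (2*m) ≠ 0 := (hseq_pos (by omega)).ne'
  have hf1 : (m.factorial : ℝ) ≠ 0 := by exact_mod_cast m.factorial_pos.ne'
  have hf2 : ((2*m).factorial : ℝ) ≠ 0 := by exact_mod_cast (2*m).factorial_pos.ne'
  field_simp

lemma tendsto_even_odd {g : ℕ → ℝ} {a : ℝ}
    (he : Tendsto (fun m => g (2*m)) atTop (nhds a))
    (ho : Tendsto (fun m => g (2*m+1)) atTop (nhds a)) : Tendsto g atTop (nhds a) := by
  rw [Metric.tendsto_atTop] at he ho ⊢
  intro ε hε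
  obtain ⟨N1, h1⟩ := he ε hε
  obtain ⟨N2, h2⟩ := ho ε hε
  refine ⟨2 * max N1 N2 + 1, fun n hn => ?_⟩
  rcases Nat.even_or_odd n with ⟨m, hm⟩ | ⟨m, hm⟩
  · have : n = 2 * m := by omega
    rw [this]; exact h1 m (by omega)
  · have : n = 2 * m + 1 := by omega
    rw [this]; exact h2 m (by omega)

lemma gseq_tendsto : Tendsto gseq atTop (nhds (Real.sqrt 2)) := by
  have hsub1 : Tendsto (fun m : ℕ => hseq (2*m-1)) atTop (nhds 1) :=
    hseq_tendsto.comp (Filter.tendsto_atTop_atTop.2 fun b => ⟨b+1, fun a ha => by omega⟩)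
  have hsub2 : Tendsto (fun m : ℕ => hseq (2*m)) atTop (nhds 1) :=
    hseq_tendsto.comp (Filter.tendsto_atTop_atTop.2 fun b => ⟨b, fun a ha => by omega⟩)
  refine tendsto_even_odd ?_ ?_
  · have hratio : Tendsto (fun m : ℕ => (2*(m:ℝ)-1)/m) atTop (nhds 2) := by
      have h0 : Tendsto (fun m : ℕ => 2 - (1:ℝ)/m) atTop (nhds (2 - 0)) :=
        tendsto_const_nhds.sub tendsto_one_div_atTop_nhds_zero_nat
      rw [show (2:ℝ) - 0 = 2 by norm_num] at h0
      refine h0.congr' ?_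
      filter_upwards [eventually_ge_atTop 1] with m hm
      have : (m:ℝ) ≠ 0 := by positivity
      field_simp
    have hsqrt : Tendsto (fun m : ℕ => Real.sqrt ((2*(m:ℝ)-1)/m)) atTop
        (nhds (Real.sqrt 2)) := (Real.continuous_sqrt.tendsto 2).comp hratio
    have hlim := hsqrt.div (hseq_tendsto.mul hsub1) (by norm_num)
    rw [show Real.sqrt 2 / (1*1) = Real.sqrt 2 by norm_num] at hlim
    refine hlim.congr' ?_
    filter_upwards [eventually_ge_atTop 1] with m hm
    exact (gseq_even hm).symm
  · have hlim := (hseq_tendsto.mul (tendsto_const_nhds (x := Real.sqrt 2))).div hsub2 (by norm_num)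
    rw [show (1:ℝ) * Real.sqrt 2 / 1 = Real.sqrt 2 by norm_num] at hlim
    refine hlim.congr' ?_
    filter_upwards [eventually_ge_atTop 1] with m hm
    exact (gseq_odd hm).symm

lemma part1 : Tendsto
    (fun N : ℕ => 2 ^ (N - 1) * betaFn ((N : ℝ) / 2) ((N : ℝ) / 2) /
      betaFn ((N : ℝ) - 1 / 2) (1 / 2)) atTop (nhds (Real.sqrt 2)) := by
  refine gseq_tendsto.congr' ?_
  filter_upwards [eventually_ge_atTop 2] with N hN
  exact (mu_eq_g hN).symm

end Part1

section Part2

variable {N : ℕ}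

lemma toSphere_univ_pos (hN : 1 ≤ N) :
    (volume : Measure (EuclideanSpace ℝ (Fin N))).toSphere Set.univ ≠ 0 ∧
    (volume : Measure (EuclideanSpace ℝ (Fin N))).toSphere Set.univ ≠ ⊤ := by
  rw [Measure.toSphere_apply_univ, finrank_euclideanSpace_fin]
  constructor
  · refine (ENNReal.mul_pos ?_ ?_).ne'
    · exact Nat.cast_ne_zero.mpr (by omega)
    · exact (measure_ball_pos _ _ one_pos).ne'
  · exact (ENNReal.mul_lt_top (ENNReal.natCast_lt_top _) measure_ball_lt_top).ne

lemma uniformOnSphere_prob (hN : 1 ≤ N) : IsProbabilityMeasure (uniformOnSphere N) := by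
  obtain ⟨h0, htop⟩ := toSphere_univ_pos hN
  constructor
  rw [uniformOnSphere, Measure.map_apply measurable_subtype_coe MeasurableSet.univ,
    Set.preimage_univ, Measure.smul_apply, smul_eq_mul, ENNReal.inv_mul_cancel h0 htop]

lemma uniformOnSphere_ae_norm : ∀ᵐ x ∂(uniformOnSphere N), ‖x‖ = 1 := by
  rw [ae_iff, uniformOnSphere,
    Measure.map_apply measurable_subtype_coe]
  · convert measure_empty (μ := ((volume : Measure (EuclideanSpace ℝ (Fin N))).toSphere
      Set.univ)⁻¹ • (volume : Measure (EuclideanSpace ℝ (Fin N))).toSphere)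
    ext y
    simp [norm_eq_of_mem_sphere y]
  · have : {a : EuclideanSpace ℝ (Fin N) | ¬ ‖a‖ = 1} = (sphere (0:EuclideanSpace ℝ (Fin N)) 1)ᶜ := by
      ext x; simp [mem_sphere_zero_iff_norm]
    rw [this]
    exact (isClosed_sphere).measurableSet.compl

lemma uniformOnSphere_map (e : EuclideanSpace ℝ (Fin N) ≃ₗᵢ[ℝ] EuclideanSpace ℝ (Fin N)) :
    (uniformOnSphere N).map e = uniformOnSphere N := by
  set E := EuclideanSpace ℝ (Fin N)
  set ν := (volume : Measure E).toSphere with hν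
  have hmem : ∀ y : sphere (0:E) 1, e y ∈ sphere (0:E) 1 := fun y => by
    simp [mem_sphere_zero_iff_norm, e.norm_map, norm_eq_of_mem_sphere y]
  set eS : sphere (0:E) 1 → sphere (0:E) 1 := fun y => ⟨e y, hmem y⟩ with heS
  have heSmeas : Measurable eS :=
    Measurable.subtype_mk (e.continuous.measurable.comp measurable_subtype_coe)
  have hcomm : (e : E → E) ∘ (Subtype.val : sphere (0:E) 1 → E) = Subtype.val ∘ eS := rfl
  have hkey : ν.map eS = ν := by
    refine Measure.ext fun s hs => ?_
    rw [Measure.map_apply heSmeas hs, Measure.toSphere_apply' _ (heSmeas hs),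
      Measure.toSphere_apply' _ hs]
    congr 1
    have hset : Set.Ioo (0:ℝ) 1 • (Subtype.val '' (eS ⁻¹' s))
        = e ⁻¹' (Set.Ioo (0:ℝ) 1 • (Subtype.val '' s)) := by
      ext x
      simp only [Set.mem_smul, Set.mem_image, Set.mem_preimage]
      constructor
      · rintro ⟨r, hr, y, ⟨z, hz, rfl⟩, rfl⟩
        exact ⟨r, hr, e z, ⟨eS z, hz, rfl⟩, by rw [← _root_.map_smul]⟩
      · rintro ⟨r, hr, y, ⟨u, hu, rfl⟩, hx⟩
        refine ⟨r, hr, e.symm u, ⟨⟨e.symm u, ?_⟩, ?_, rfl⟩, ?_⟩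
        · simp [mem_sphere_zero_iff_norm, e.symm.norm_map, norm_eq_of_mem_sphere u]
        · convert hu using 1
          apply Subtype.ext
          simp [heS]
        · apply e.injective
          rw [_root_.map_smul]
          simpa using hx
    rw [hset]
    have : (volume : Measure E) (e ⁻¹' (Set.Ioo (0:ℝ) 1 • (Subtype.val '' s)))
        = ((volume : Measure E).map e) (Set.Ioo (0:ℝ) 1 • (Subtype.val '' s)) := by
      exact (MeasurableEquiv.map_apply (e.toHomeomorph.toMeasurableEquiv) _).symm
    rw [this, e.measurePreserving.map_eq]
  calc (uniformOnSphere N).map e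
      = (((ν Set.univ)⁻¹ • ν).map Subtype.val).map e := rfl
    _ = ((ν Set.univ)⁻¹ • ν).map ((e : E → E) ∘ Subtype.val) :=
        Measure.map_map e.continuous.measurable measurable_subtype_coe
    _ = ((ν Set.univ)⁻¹ • ν).map (Subtype.val ∘ eS) := by rw [hcomm]
    _ = (((ν Set.univ)⁻¹ • ν).map eS).map Subtype.val :=
        (Measure.map_map measurable_subtype_coe heSmeas).symm
    _ = uniformOnSphere N := by
        rw [Measure.map_smul, hkey]
        rfl

lemma uniformOnSphere_integral_comp
    (e : EuclideanSpace ℝ (Fin N) ≃ₗᵢ[ℝ] EuclideanSpace ℝ (Fin N))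
    (f : EuclideanSpace ℝ (Fin N) → ℝ) :
    ∫ x, f (e x) ∂(uniformOnSphere N) = ∫ x, f x ∂(uniformOnSphere N) := by
  have mp : MeasurePreserving e (uniformOnSphere N) (uniformOnSphere N) :=
    ⟨e.continuous.measurable, uniformOnSphere_map e⟩
  exact mp.integral_comp (e.toHomeomorph.toMeasurableEquiv.measurableEmbedding) f

open scoped RealInnerProductSpace

lemma uniformOnSphere_integrable (hN : 1 ≤ N) {f : EuclideanSpace ℝ (Fin N) → ℝ} {C : ℝ}
    (hf : Continuous f) (hC : ∀ x : EuclideanSpace ℝ (Fin N), ‖x‖ = 1 → |f x| ≤ C) :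
    Integrable f (uniformOnSphere N) := by
  haveI := uniformOnSphere_prob hN
  refine Integrable.mono' (integrable_const C) hf.aestronglyMeasurable ?_
  filter_upwards [uniformOnSphere_ae_norm] with x hx
  simpa [Real.norm_eq_abs] using hC x hx

lemma integral_inner_zero (p : EuclideanSpace ℝ (Fin N)) :
    ∫ x, ⟪x, p⟫ ∂(uniformOnSphere N) = 0 := by
  have h := uniformOnSphere_integral_comp (LinearIsometryEquiv.neg ℝ
    (E := EuclideanSpace ℝ (Fin N))) (fun x => ⟪x, p⟫)
  simp only [LinearIsometryEquiv.coe_neg, inner_neg_left] at h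
  rw [integral_neg] at h
  linarith

lemma integral_inner_sq (hN : 1 ≤ N) {p : EuclideanSpace ℝ (Fin N)} (hp : ‖p‖ = 1) :
    ∫ x, ⟪x, p⟫^2 ∂(uniformOnSphere N) = 1 / N := by
  haveI := uniformOnSphere_prob hN
  -- step a : independence of the unit vector
  have ha : ∀ q : EuclideanSpace ℝ (Fin N), ‖q‖ = 1 →
      ∫ x, ⟪x, q⟫^2 ∂(uniformOnSphere N) = ∫ x, ⟪x, p⟫^2 ∂(uniformOnSphere N) := by
    intro q hq
    set R := Submodule.reflection (Submodule.span ℝ {p - q})ᗮ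
    have hRp : R p = q := Submodule.reflection_sub (by rw [hp, hq])
    calc ∫ x, ⟪x, q⟫^2 ∂(uniformOnSphere N)
        = ∫ x, ⟪R x, q⟫^2 ∂(uniformOnSphere N) :=
          (uniformOnSphere_integral_comp R (fun x => ⟪x, q⟫^2)).symm
      _ = ∫ x, ⟪R x, R p⟫^2 ∂(uniformOnSphere N) := by rw [hRp]
      _ = ∫ x, ⟪x, p⟫^2 ∂(uniformOnSphere N) := by
          congr 1; ext x; rw [LinearIsometryEquiv.inner_map_map]
  -- integrability of coordinates squared
  have hint : ∀ q : EuclideanSpace ℝ (Fin N),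
      Integrable (fun x => ⟪x, q⟫^2) (uniformOnSphere N) := by
    intro q
    refine uniformOnSphere_integrable hN ((continuous_id.inner continuous_const).pow 2)
      (C := ‖q‖^2) fun x hx => ?_
    have h1 : |⟪x, q⟫| ≤ ‖x‖ * ‖q‖ := abs_real_inner_le_norm x q
    rw [hx, one_mul] at h1
    rw [abs_of_nonneg (sq_nonneg _)]
    calc ⟪x, q⟫^2 = |⟪x, q⟫|^2 := (sq_abs _).symm
      _ ≤ ‖q‖^2 := pow_le_pow_left₀ (abs_nonneg _) h1 2
  -- step b : sum over basis
  have hb : ∑ i : Fin N, ∫ x, ⟪x, EuclideanSpace.single i (1:ℝ)⟫^2 ∂(uniformOnSphere N)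
      = 1 := by
    rw [← integral_finset_sum _ (fun i _ => hint _)]
    have : ∀ᵐ x ∂(uniformOnSphere N),
        ∑ i : Fin N, ⟪x, EuclideanSpace.single i (1:ℝ)⟫^2 = 1 := by
      filter_upwards [uniformOnSphere_ae_norm] with x hx
      have hc : ∀ i, ⟪x, EuclideanSpace.single i (1:ℝ)⟫ = x i := fun i => by
        rw [EuclideanSpace.inner_single_right]; simp
      simp_rw [hc]
      have hnorm : ‖x‖^2 = ∑ i, (x i)^2 := by
        rw [EuclideanSpace.norm_eq x, Real.sq_sqrt (by positivity)]
        congr 1; ext i; rw [Real.norm_eq_abs, sq_abs]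
      rw [← hnorm, hx, one_pow]
    rw [integral_congr_ae this, integral_const]
    simp
  have hc : ∀ i : Fin N,
      ∫ x, ⟪x, EuclideanSpace.single i (1:ℝ)⟫^2 ∂(uniformOnSphere N)
      = ∫ x, ⟪x, p⟫^2 ∂(uniformOnSphere N) := fun i =>
    ha _ (by rw [EuclideanSpace.norm_single]; norm_num)
  rw [Finset.sum_congr rfl (fun i _ => hc i), Finset.sum_const, Finset.card_univ,
    Fintype.card_fin, nsmul_eq_mul] at hb
  have hN' : (N:ℝ) ≠ 0 := by exact_mod_cast (by omega : N ≠ 0)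
  field_simp at hb ⊢
  linarith

lemma variance_bounds (hN : 1 ≤ N) {p : EuclideanSpace ℝ (Fin N)} (hp : ‖p‖ = 1) :
    0 ≤ (∫ x, ‖x - p‖^2 ∂(uniformOnSphere N)) - (∫ x, ‖x - p‖ ∂(uniformOnSphere N))^2 ∧
    (∫ x, ‖x - p‖^2 ∂(uniformOnSphere N)) - (∫ x, ‖x - p‖ ∂(uniformOnSphere N))^2
      ≤ 2 / N := by
  haveI := uniformOnSphere_prob hN
  set σ := uniformOnSphere N with hσ
  have hbd : ∀ x : EuclideanSpace ℝ (Fin N), ‖x‖ = 1 → ‖x - p‖ ≤ 2 := fun x hx => by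
    calc ‖x - p‖ ≤ ‖x‖ + ‖p‖ := norm_sub_le x p
      _ = 2 := by rw [hx, hp]; norm_num
  have iY : Integrable (fun x => ‖x - p‖) σ := by
    refine uniformOnSphere_integrable hN ((continuous_id.sub continuous_const).norm)
      (C := 2) fun x hx => ?_
    rw [abs_of_nonneg (norm_nonneg _)]; exact hbd x hx
  have iY2 : Integrable (fun x => ‖x - p‖^2) σ := by
    refine uniformOnSphere_integrable hN (((continuous_id.sub continuous_const).norm).pow 2)
      (C := 4) fun x hx => ?_
    rw [abs_of_nonneg (sq_nonneg _)]
    nlinarith [hbd x hx, norm_nonneg (x - p)]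
  have iT : Integrable (fun x => ⟪x, p⟫) σ := by
    refine uniformOnSphere_integrable hN (continuous_id.inner continuous_const)
      (C := 1) fun x hx => ?_
    calc |⟪x, p⟫| ≤ ‖x‖ * ‖p‖ := abs_real_inner_le_norm x p
      _ = 1 := by rw [hx, hp]; norm_num
  have iT2 : Integrable (fun x => ⟪x, p⟫^2) σ := by
    refine uniformOnSphere_integrable hN ((continuous_id.inner continuous_const).pow 2)
      (C := 1) fun x hx => ?_
    have h1 : |⟪x, p⟫| ≤ 1 := by
      calc |⟪x, p⟫| ≤ ‖x‖ * ‖p‖ := abs_real_inner_le_norm x p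
        _ = 1 := by rw [hx, hp]; norm_num
    rw [abs_of_nonneg (sq_nonneg _)]
    calc ⟪x, p⟫^2 = |⟪x, p⟫|^2 := (sq_abs _).symm
      _ ≤ 1^2 := pow_le_pow_left₀ (abs_nonneg _) h1 2
      _ = 1 := one_pow 2
  have iYc : ∀ c : ℝ, Integrable (fun x => (‖x - p‖ - c)^2) σ := by
    intro c
    have : (fun x => (‖x - p‖ - c)^2)
        = fun x => ‖x - p‖^2 - (2*c)*‖x - p‖ + c^2 := funext fun x => by ring
    rw [this]
    exact (iY2.sub (iY.const_mul (2*c))).add (integrable_const _)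
  have hexp : ∀ c : ℝ, ∫ x, (‖x - p‖ - c)^2 ∂σ
      = (∫ x, ‖x - p‖^2 ∂σ) - 2*c*(∫ x, ‖x - p‖ ∂σ) + c^2 := by
    intro c
    have h1 : (fun x => (‖x - p‖ - c)^2)
        = fun x => ‖x - p‖^2 - (2*c)*‖x - p‖ + c^2 := funext fun x => by ring
    have hint1 : Integrable (fun x => ‖x - p‖^2 - 2*c*‖x - p‖) σ :=
      iY2.sub (iY.const_mul (2*c))
    rw [h1, integral_add hint1 (integrable_const _),
      integral_sub iY2 (iY.const_mul (2*c)), integral_const_mul, integral_const]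
    simp [mul_assoc]
  set I1 := ∫ x, ‖x - p‖ ∂σ with hI1
  set I2 := ∫ x, ‖x - p‖^2 ∂σ with hI2
  have hlow : 0 ≤ I2 - I1^2 := by
    have h := hexp I1
    have h0 : 0 ≤ ∫ x, (‖x - p‖ - I1)^2 ∂σ := integral_nonneg fun x => sq_nonneg _
    nlinarith [h, h0]
  refine ⟨hlow, ?_⟩
  have hs2 : Real.sqrt 2 ^ 2 = 2 := Real.sq_sqrt (by norm_num)
  have hmono : ∫ x, (‖x - p‖ - Real.sqrt 2)^2 ∂σ ≤ ∫ x, 2*⟪x, p⟫^2 ∂σ := by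
    refine integral_mono_ae (iYc _) (iT2.const_mul 2) ?_
    filter_upwards [uniformOnSphere_ae_norm] with x hx
    have hY2 : ‖x - p‖^2 = 2 - 2*⟪x, p⟫ := by
      rw [norm_sub_sq_real, hx, hp]; ring
    have hY0 : (0:ℝ) ≤ ‖x - p‖ := norm_nonneg _
    have key : (0:ℝ) ≤ (‖x - p‖ - Real.sqrt 2)^2 * (‖x - p‖^2 + 2*Real.sqrt 2*‖x - p‖) :=
      mul_nonneg (sq_nonneg _) (add_nonneg (sq_nonneg _)
        (mul_nonneg (by positivity) hY0))
    nlinarith [key, hY2, hs2, sq_nonneg (‖x - p‖ - Real.sqrt 2)]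
  have hval : ∫ x, 2*⟪x, p⟫^2 ∂σ = 2 / (N:ℝ) := by
    rw [integral_const_mul, integral_inner_sq hN hp]; ring
  have h1 := hexp (Real.sqrt 2)
  rw [hs2] at h1
  nlinarith [hmono, hval, h1, sq_nonneg (I1 - Real.sqrt 2), hs2]

lemma part2 (p : ∀ N : ℕ, EuclideanSpace ℝ (Fin N)) (hp : ∀ N, 2 ≤ N → ‖p N‖ = 1) :
    Tendsto (fun N : ℕ => (∫ x, ‖x - p N‖ ^ 2 ∂(uniformOnSphere N)) -
      (∫ x, ‖x - p N‖ ∂(uniformOnSphere N)) ^ 2) atTop (nhds 0) := by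
  refine tendsto_of_tendsto_of_tendsto_of_le_of_le' (g := fun _ => (0:ℝ))
    (h := fun N : ℕ => 2 / (N:ℝ)) tendsto_const_nhds
    (tendsto_const_div_atTop_nhds_zero_nat 2) ?_ ?_
  · filter_upwards [eventually_ge_atTop 2] with N hN
    exact (variance_bounds (by omega) (hp N hN)).1
  · filter_upwards [eventually_ge_atTop 2] with N hN
    exact (variance_bounds (by omega) (hp N hN)).2

end Part2

theorem sphere_chord_mean_limit
    (p : ∀ N : ℕ, EuclideanSpace ℝ (Fin N)) (hp : ∀ N, 2 ≤ N → ‖p N‖ = 1) :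
    Filter.Tendsto
      (fun N : ℕ => 2 ^ (N - 1) * betaFn ((N : ℝ) / 2) ((N : ℝ) / 2) /
        betaFn ((N : ℝ) - 1 / 2) (1 / 2))
      Filter.atTop (nhds (Real.sqrt 2)) ∧
    Filter.Tendsto
      (fun N : ℕ => (∫ x, ‖x - p N‖ ^ 2 ∂(uniformOnSphere N)) -
        (∫ x, ‖x - p N‖ ∂(uniformOnSphere N)) ^ 2)
      Filter.atTop (nhds 0) := by
  exact ⟨part1, part2 p hp⟩
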